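/- Let k ≥ 1 and let T be a k-colorable tournament with at least two vertices. Then there exist two distinct vertices u and w of T such that the induced subtournament T[N⁺(u) ∪ N⁻(w)] is (k−1)-colorable. -/
import Mathlib


/-- A tournament on a vertex type `V`: for every two distinct vertices exactly one
of the two possible arcs is present, and there are no loops. -/
structure Tournament (V : Type) where
  arc : V → V → Prop
  asymm : ∀ u v, arc u v → ¬ arc v u
  total : ∀ u v, u ≠ v → arc u v ∨ arc v u

namespace Tournament

variable {V : Type}

/-- A set of vertices is transitive (acyclic) if it contains no directed triangle. -/
def IsTransitiveSet (T : Tournament V) (S : Set V) : Prop :=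
  ∀ a ∈ S, ∀ b ∈ S, ∀ c ∈ S, ¬ (T.arc a b ∧ T.arc b c ∧ T.arc c a)

/-- Out-neighborhood `N⁺(v)`. -/
def outN (T : Tournament V) (v : V) : Set V := {w | T.arc v w}

/-- In-neighborhood `N⁻(v)`. -/
def inN (T : Tournament V) (v : V) : Set V := {w | T.arc w v}

/-- Arc neighborhood `N(uv)` of an arc `u → v`: vertices forming a directed
triangle with the arc. -/
def arcNbhd (T : Tournament V) (u v : V) : Set V := {w | T.arc v w ∧ T.arc w u}

/-- `T.ColorableOn S k` means the induced subtournament `T[S]` can be partitioned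
into at most `k` transitive sets. -/
def ColorableOn (T : Tournament V) (S : Set V) (k : ℕ) : Prop :=
  ∃ f : V → ℕ, (∀ v ∈ S, f v < k) ∧ ∀ i : ℕ, T.IsTransitiveSet {v | v ∈ S ∧ f v = i}

/-- The dichromatic number of `T`: the least `k` such that `V(T)` can be
partitioned into `k` transitive sets. -/
noncomputable def dichromaticNumber (T : Tournament V) : ℕ :=
  sInf {k | T.ColorableOn Set.univ k}

/-- An arc `u → v` is heavy if `N(uv)` contains a directed triangle. -/
def IsHeavy (T : Tournament V) (u v : V) : Prop :=
  T.arc u v ∧ ∃ a b c,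
    a ∈ T.arcNbhd u v ∧ b ∈ T.arcNbhd u v ∧ c ∈ T.arcNbhd u v ∧
    T.arc a b ∧ T.arc b c ∧ T.arc c a

/-- A tournament is light if it has no heavy arc. -/
def IsLight (T : Tournament V) : Prop := ∀ u v, ¬ T.IsHeavy u v

/-- The induced subtournament `T[S]` is light: for every arc within `S`, the part
of its arc neighborhood inside `S` is transitive. -/
def LightOn (T : Tournament V) (S : Set V) : Prop :=
  ∀ u ∈ S, ∀ v ∈ S, T.arc u v → T.IsTransitiveSet (T.arcNbhd u v ∩ S)

/-- `S` is the vertex set of a directed triangle. -/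
def IsTriangle (T : Tournament V) (S : Set V) : Prop :=
  ∃ a b c, S = {a, b, c} ∧ T.arc a b ∧ T.arc b c ∧ T.arc c a

/-- `S ⇒ U`: every arc between `S` and `U` is directed from `S` to `U`. -/
def Beats (T : Tournament V) (S U : Set V) : Prop :=
  ∀ s ∈ S, ∀ u ∈ U, T.arc s u

/-- `X 0, …, X (L-1)` is a `C₃`-chain of length `L`: pairwise vertex-disjoint
directed triangles with `X i ⇒ X (i+1)`. -/
def IsC3Chain (T : Tournament V) (X : ℕ → Set V) (L : ℕ) : Prop :=
  (∀ i < L, T.IsTriangle (X i)) ∧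
  (∀ i < L, ∀ j < L, i ≠ j → Disjoint (X i) (X j)) ∧
  (∀ i, i + 1 < L → T.Beats (X i) (X (i + 1)))

/-- `v 0, …, v k` are the vertices of a shortest directed path from `v 0` to `v k`:
consecutive arcs are present, and no directed path (walk) from `v 0` to `v k`
has fewer than `k` arcs. -/
def IsShortestPath (T : Tournament V) (v : ℕ → V) (k : ℕ) : Prop :=
  (∀ i < k, T.arc (v i) (v (i + 1))) ∧
  (∀ m : ℕ, ∀ p : ℕ → V, p 0 = v 0 → p m = v k →
    (∀ i < m, T.arc (p i) (p (i + 1))) → k ≤ m)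

/-- The path decomposition `D 0, …, D (k+1)` associated to the path `v 0, …, v k`:
`D 0 = N⁺(v 0)`, `D i = N(e i) \ (D 0 ∪ ⋯ ∪ D (i-1))` for `1 ≤ i ≤ k` where
`e i` is the arc `v (i-1) → v i`, and `D (k+1) = N⁻(v k) \ (D 0 ∪ ⋯ ∪ D k)`. -/
def PathDecomp (T : Tournament V) (v : ℕ → V) (k : ℕ) (D : ℕ → Set V) : Prop :=
  D 0 = T.outN (v 0) ∧
  (∀ i, 1 ≤ i → i ≤ k → D i = T.arcNbhd (v (i - 1)) (v i) \ ⋃ j < i, D j) ∧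
  D (k + 1) = T.inN (v k) \ ⋃ j < k + 1, D j

end Tournament

namespace Tournament

variable {V : Type}

lemma isTransitiveSet_mono' (T : Tournament V) {S U : Set V} (h : S ⊆ U)
    (hU : T.IsTransitiveSet U) : T.IsTransitiveSet S :=
  fun a ha b hb c hc => hU a (h ha) b (h hb) c (h hc)

lemma not_arc_self' (T : Tournament V) (v : V) : ¬ T.arc v v :=
  fun h => T.asymm v v h h

lemma exists_sink' (T : Tournament V) [Fintype V] {C : Set V}
    (htr : T.IsTransitiveSet C) {a : V} (ha : a ∈ C) :
    ∃ u ∈ C, ∀ x ∈ C, ¬ T.arc u x := by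
  classical
  set s := C.toFinset with hs
  have has : a ∈ s := Set.mem_toFinset.mpr ha
  obtain ⟨u, hus, hmin⟩ :=
    s.exists_min_image (fun v => (s.filter (fun y => T.arc v y)).card) ⟨a, has⟩
  refine ⟨u, Set.mem_toFinset.mp hus, ?_⟩
  intro x hx harc
  have hxs : x ∈ s := Set.mem_toFinset.mpr hx
  have hsub : s.filter (fun y => T.arc x y) ⊂ s.filter (fun y => T.arc u y) := by
    constructor
    · intro y hy
      rw [Finset.mem_filter] at hy ⊢
      refine ⟨hy.1, ?_⟩
      by_contra hn
      have hyu : T.arc y u := by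
        rcases eq_or_ne y u with rfl | hne
        · exact absurd hy.2 (T.asymm _ _ harc)
        · rcases T.total y u hne with h | h
          · exact h
          · exact absurd h hn
      exact htr u (Set.mem_toFinset.mp hus) x hx y (Set.mem_toFinset.mp hy.1)
        ⟨harc, hy.2, hyu⟩
    · intro hcon
      have := hcon (Finset.mem_filter.mpr ⟨hxs, harc⟩)
      exact T.not_arc_self' x (Finset.mem_filter.mp this).2
  have h1 := Finset.card_lt_card hsub
  have h2 := hmin x hxs
  omega

/-- The reversed tournament. -/
def rev' (T : Tournament V) : Tournament V where
  arc u v := T.arc v u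
  asymm u v h := T.asymm v u h
  total u v h := (T.total u v h).symm

lemma rev'_transitive (T : Tournament V) {C : Set V} (h : T.IsTransitiveSet C) :
    T.rev'.IsTransitiveSet C := by
  intro a ha b hb c hc ⟨h1, h2, h3⟩
  exact h c hc b hb a ha ⟨h2, h1, h3⟩

lemma exists_source' (T : Tournament V) [Fintype V] {C : Set V}
    (htr : T.IsTransitiveSet C) {a : V} (ha : a ∈ C) :
    ∃ w ∈ C, ∀ x ∈ C, ¬ T.arc x w :=
  T.rev'.exists_sink' (T.rev'_transitive htr) ha

lemma recolor' (T : Tournament V) {f : V → ℕ} {k c : ℕ} (hc : c < k)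
    (hf : ∀ v, f v < k)
    (htr : ∀ i, T.IsTransitiveSet {v | v ∈ Set.univ ∧ f v = i})
    (S : Set V) (hS : ∀ v ∈ S, f v ≠ c) : T.ColorableOn S (k - 1) := by
  refine ⟨fun v => if f v < c then f v else f v - 1, ?_, ?_⟩
  · intro v hv
    have h1 := hf v
    have h2 := hS v hv
    show (if f v < c then f v else f v - 1) < k - 1
    split_ifs <;> omega
  · intro i
    have hsub : {v | v ∈ S ∧ (if f v < c then f v else f v - 1) = i} ⊆
        {v | v ∈ Set.univ ∧ f v = (if i < c then i else i + 1)} := by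
      rintro v ⟨hvS, hvi⟩
      have h1 := hS v hvS
      refine ⟨trivial, ?_⟩
      split_ifs at hvi ⊢ <;> omega
    exact T.isTransitiveSet_mono' hsub (htr _)

end Tournament


theorem stmt_6 {V : Type} [Fintype V] (T : Tournament V)
    (k : ℕ) (hk : 1 ≤ k) (hcard : 2 ≤ Fintype.card V)
    (hcol : T.ColorableOn Set.univ k) :
    ∃ u w : V, u ≠ w ∧ T.ColorableOn (T.outN u ∪ T.inN w) (k - 1) := by
  classical
  obtain ⟨f, hf, htr⟩ := hcol
  have hf' : ∀ v, f v < k := fun v => hf v trivial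
  by_cases hA : ∃ c, c < k ∧ ∀ v, f v ≠ c
  · obtain ⟨c, hck, hc⟩ := hA
    obtain ⟨u, w, huw⟩ := Fintype.exists_pair_of_one_lt_card (α := V) (by omega)
    exact ⟨u, w, huw, T.recolor' hck hf' htr _ (fun v _ => hc v)⟩
  · push_neg at hA
    by_cases hB : ∃ a b : V, a ≠ b ∧ f a = f b
    · obtain ⟨a, b, hab, hfab⟩ := hB
      set c := f a with hcdef
      have htrC : T.IsTransitiveSet {v | f v = c} := by
        refine T.isTransitiveSet_mono' ?_ (htr c)
        intro v hv; exact ⟨trivial, hv⟩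
      have haC : a ∈ {v | f v = c} := rfl
      have hbC : b ∈ {v | f v = c} := hfab.symm
      obtain ⟨u, huC, hu⟩ := T.exists_sink' htrC haC
      obtain ⟨w, hwC, hw⟩ := T.exists_source' htrC haC
      have huw : u ≠ w := by
        rintro rfl
        have hua : u = a := by
          by_contra hne
          rcases T.total u a hne with h | h
          · exact hu a haC h
          · exact hw a haC h
        have hub : u = b := by
          by_contra hne
          rcases T.total u b hne with h | h
          · exact hu b hbC h
          · exact hw b hbC h
        exact hab (hua ▸ hub ▸ rfl)
      refine ⟨u, w, huw, T.recolor' (hf' a) hf' htr _ ?_⟩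
      intro v hv hvc
      have hvC : v ∈ {x | f x = c} := hvc
      rcases hv with hv | hv
      · exact hu v hvC hv
      · exact hw v hvC hv
    · push_neg at hB
      have hinj : ∀ x y : V, f x = f y → x = y := by
        intro x y h
        by_contra hne
        exact hB x y hne h
      obtain ⟨x, y, hxy⟩ := Fintype.exists_pair_of_one_lt_card (α := V) (by omega)
      by_cases hx : ∃ w, T.arc w x
      · obtain ⟨w, hwx⟩ := hx
        have hne : x ≠ w := fun h => T.not_arc_self' x (h ▸ hwx)
        refine ⟨x, w, hne, T.recolor' (hf' x) hf' htr _ ?_⟩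
        intro v hv hvc
        have : v = x := hinj v x hvc
        subst this
        rcases hv with hv | hv
        · exact T.not_arc_self' v hv
        · exact T.asymm w v hwx hv
      · push_neg at hx
        refine ⟨y, x, hxy.symm, T.recolor' (hf' y) hf' htr _ ?_⟩
        intro v hv hvc
        have : v = y := hinj v y hvc
        subst this
        rcases hv with hv | hv
        · exact T.not_arc_self' v hv
        · exact hx v hv
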